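/- Let f_1,…,f_k be monic real-rooted polynomials of degree n with a common interlacing. Then there exists an index i such that the largest root of f_i is at most the largest root of f_1 + f_2 + … + f_k. -/

import Mathlib

open scoped Classical
open Polynomial

/-- A real polynomial is real-rooted if it has a full set of real roots
(counted with multiplicity). -/
def RealRooted (f : Polynomial ℝ) : Prop := Multiset.card f.roots = f.natDegree

/-- The roots of a real polynomial, sorted in increasing order. -/
noncomputable def sortedRoots (f : Polynomial ℝ) : List ℝ := f.roots.sort (· ≤ ·)

/-- `g` interlaces `f`: both are real-rooted, `deg g = deg f - 1`, and the sorted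
roots satisfy `β₁ ≤ α₁ ≤ β₂ ≤ ⋯ ≤ α_{n-1} ≤ β_n`. -/
def Interlaces (g f : Polynomial ℝ) : Prop :=
  RealRooted f ∧ RealRooted g ∧ g.natDegree + 1 = f.natDegree ∧
  ∀ k, k < g.natDegree →
    (sortedRoots f).getD k 0 ≤ (sortedRoots g).getD k 0 ∧
    (sortedRoots g).getD k 0 ≤ (sortedRoots f).getD (k + 1) 0

/-- The largest real root of a polynomial. -/
noncomputable def maxRoot (f : Polynomial ℝ) : ℝ := sSup {x : ℝ | f.IsRoot x}

lemma sortedRoots_length (f : Polynomial ℝ) : (sortedRoots f).length = Multiset.card f.roots :=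
  Multiset.length_sort _

lemma sortedRoots_sorted (f : Polynomial ℝ) : (sortedRoots f).Pairwise (· ≤ ·) :=
  f.roots.pairwise_sort _

lemma coe_sortedRoots (f : Polynomial ℝ) : (↑(sortedRoots f) : Multiset ℝ) = f.roots :=
  f.roots.sort_eq _

lemma getD_mono {L : List ℝ} (hL : L.Pairwise (· ≤ ·)) {i j : ℕ} (hij : i ≤ j)
    (hj : j < L.length) : L.getD i 0 ≤ L.getD j 0 := by
  rw [List.getD_eq_getElem _ _ (lt_of_le_of_lt hij hj), List.getD_eq_getElem _ _ hj]
  rcases lt_or_eq_of_le hij with h | rfl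
  · exact List.pairwise_iff_getElem.mp hL i j (lt_of_le_of_lt hij hj) hj h
  · exact le_refl _

lemma isGreatest_root {f : Polynomial ℝ} (hf : f ≠ 0) (hrr : RealRooted f)
    (hn : 0 < f.natDegree) :
    IsGreatest {x | f.IsRoot x} ((sortedRoots f).getD (f.natDegree - 1) 0) := by
  have hlen : (sortedRoots f).length = f.natDegree := by rw [sortedRoots_length, hrr]
  have hmem : ∀ x, f.IsRoot x ↔ x ∈ sortedRoots f := by
    intro x
    rw [← Multiset.mem_coe, coe_sortedRoots, mem_roots hf]
  have h1 : f.natDegree - 1 < (sortedRoots f).length := by omega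
  constructor
  · rw [Set.mem_setOf_eq, hmem, List.getD_eq_getElem _ _ h1]
    exact List.getElem_mem _
  · intro x hx
    rw [Set.mem_setOf_eq, hmem] at hx
    obtain ⟨j, hj, rfl⟩ := List.mem_iff_getElem.mp hx
    rw [← List.getD_eq_getElem _ 0 hj]
    exact getD_mono (sortedRoots_sorted f) (by omega) h1

lemma maxRoot_eq {f : Polynomial ℝ} (hf : f ≠ 0) (hrr : RealRooted f)
    (hn : 0 < f.natDegree) :
    maxRoot f = (sortedRoots f).getD (f.natDegree - 1) 0 :=
  (isGreatest_root hf hrr hn).csSup_eq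

lemma eval_nonpos_of_between {f : Polynomial ℝ} (hmonic : f.Monic) (hrr : RealRooted f)
    (hn : 0 < f.natDegree) {m : ℝ}
    (hlow : ∀ j, j + 1 < f.natDegree → (sortedRoots f).getD j 0 ≤ m)
    (hhigh : m ≤ (sortedRoots f).getD (f.natDegree - 1) 0) :
    f.eval m ≤ 0 := by
  have hlen : (sortedRoots f).length = f.natDegree := by rw [sortedRoots_length, hrr]
  have hne : sortedRoots f ≠ [] := by
    intro h; rw [h] at hlen; simp at hlen; omega
  have hfp : f = ((sortedRoots f : Multiset ℝ).map fun a => X - C a).prod := by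
    have := C_leadingCoeff_mul_prod_multiset_X_sub_C (p := f) hrr
    rw [coe_sortedRoots]
    rw [hmonic.leadingCoeff, map_one, one_mul] at this
    exact this.symm
  have heval : f.eval m = ((sortedRoots f).map fun a => m - a).prod := by
    conv_lhs => rw [hfp]
    rw [eval_multiset_prod]
    simp [Multiset.map_map, Multiset.map_coe, Multiset.prod_coe, Function.comp_def]
  rw [heval]
  -- split off last element
  have hL : sortedRoots f = (sortedRoots f).dropLast ++ [(sortedRoots f).getLast hne] :=
    ((sortedRoots f).dropLast_append_getLast hne).symm
  rw [hL, List.map_append, List.prod_append, List.map_singleton, List.prod_singleton]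
  apply mul_nonpos_of_nonneg_of_nonpos
  · apply List.prod_nonneg
    intro x hx
    rw [List.mem_map] at hx
    obtain ⟨a, ha, rfl⟩ := hx
    obtain ⟨j, hj, rfl⟩ := List.mem_iff_getElem.mp ha
    rw [List.length_dropLast] at hj
    have hj2 : j + 1 < f.natDegree := by omega
    have : (sortedRoots f).dropLast[j] = (sortedRoots f).getD j 0 := by
      rw [List.getElem_dropLast, List.getD_eq_getElem _ 0 (by omega)]
    rw [this]
    have := hlow j hj2
    linarith
  · have : (sortedRoots f).getLast hne = (sortedRoots f).getD (f.natDegree - 1) 0 := by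
      rw [List.getLast_eq_getElem, ← List.getD_eq_getElem _ 0 (by omega)]
      congr 1
      omega
    rw [this]
    linarith


/-- If monic real-rooted polynomials of degree `n` have a common interlacing, then some
member has largest root at most the largest root of their sum. -/
theorem exists_maxRoot_le_maxRoot_sum (n k : ℕ) (hk : 0 < k) (f : Fin k → Polynomial ℝ)
    (hmonic : ∀ i, (f i).Monic) (hdeg : ∀ i, (f i).natDegree = n)
    (hrr : ∀ i, RealRooted (f i))
    (hcommon : ∃ g : Polynomial ℝ, g.Monic ∧ ∀ i, Interlaces g (f i)) :
    ∃ i, maxRoot (f i) ≤ maxRoot (∑ i, f i) := by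
  obtain ⟨g, hg, hint⟩ := hcommon
  have i00 : Fin k := ⟨0, hk⟩
  have hgd : g.natDegree + 1 = n := by rw [(hint i00).2.2.1, hdeg]
  have hn1 : 0 < n := by omega
  have hfne : ∀ i, f i ≠ 0 := fun i => (hmonic i).ne_zero
  have hlen : ∀ i, (sortedRoots (f i)).length = n := by
    intro i; rw [sortedRoots_length, hrr, hdeg]
  have hmR : ∀ i, maxRoot (f i) = (sortedRoots (f i)).getD (n - 1) 0 := by
    intro i
    rw [maxRoot_eq (hfne i) (hrr i) (by rw [hdeg]; exact hn1), hdeg]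
  obtain ⟨i₀, -, hmin⟩ := Finset.exists_min_image Finset.univ (fun i => maxRoot (f i))
    ⟨i00, Finset.mem_univ _⟩
  refine ⟨i₀, ?_⟩
  set m := maxRoot (f i₀) with hm
  set F := ∑ i, f i with hF
  -- each root below the top of each f i is ≤ m
  have hlow : ∀ i j, j + 1 < n → (sortedRoots (f i)).getD j 0 ≤ m := by
    intro i j hj
    have hjg : j < g.natDegree := by omega
    have h1 : (sortedRoots (f i)).getD j 0 ≤ (sortedRoots g).getD j 0 := ((hint i).2.2.2 j hjg).1
    have h2 : (sortedRoots g).getD j 0 ≤ (sortedRoots (f i₀)).getD (j + 1) 0 :=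
      ((hint i₀).2.2.2 j hjg).2
    have h3 : (sortedRoots (f i₀)).getD (j + 1) 0 ≤ (sortedRoots (f i₀)).getD (n - 1) 0 :=
      getD_mono (sortedRoots_sorted _) (by omega) (by rw [hlen]; omega)
    rw [hm, hmR i₀]
    linarith
  -- eval of each f i at m is nonpositive
  have hevm : ∀ i, (f i).eval m ≤ 0 := by
    intro i
    apply eval_nonpos_of_between (hmonic i) (hrr i) (by rw [hdeg]; exact hn1)
    · intro j hj; exact hlow i j (by rwa [hdeg i] at hj)
    · rw [hdeg]
      have h := hmin i (Finset.mem_univ i)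
      rw [hmR i] at h
      exact h
  have hFm : F.eval m ≤ 0 := by
    rw [hF, eval_finset_sum]
    exact Finset.sum_nonpos fun i _ => hevm i
  -- F has degree n with positive leading coefficient
  have hFc : F.coeff n = (k : ℝ) := by
    rw [hF, finset_sum_coeff]
    have : ∀ i ∈ Finset.univ, (f i).coeff n = 1 := by
      intro i _
      rw [← hdeg i]
      exact (hmonic i).coeff_natDegree
    rw [Finset.sum_congr rfl this]
    simp
  have hF0 : F ≠ 0 := by
    intro h
    rw [h, coeff_zero] at hFc
    have hk' : (k : ℝ) ≠ 0 := by positivity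
    exact hk' hFc.symm
  have hFd : F.natDegree = n := by
    apply le_antisymm
    · exact natDegree_sum_le_of_forall_le _ _ fun i _ => le_of_eq (hdeg i)
    · apply le_natDegree_of_ne_zero
      rw [hFc]
      positivity
  have hFlc : 0 < F.leadingCoeff := by
    rw [leadingCoeff, hFd, hFc]
    positivity
  have hFdeg : 0 < F.degree := by
    rw [← natDegree_pos_iff_degree_pos, hFd]
    exact hn1
  -- F tends to infinity, so it has a value ≥ 0 beyond m
  have htop := F.tendsto_atTop_of_leadingCoeff_nonneg hFdeg hFlc.le
  obtain ⟨x₀, hx₀m, hx₀⟩ := ((Filter.eventually_ge_atTop m).and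
    (htop.eventually_ge_atTop 0)).exists
  -- IVT gives a root c ∈ [m, x₀]
  have hsub := intermediate_value_Icc hx₀m (F.continuousOn (s := Set.Icc m x₀))
  have h0mem : (0 : ℝ) ∈ Set.Icc (F.eval m) (F.eval x₀) := ⟨hFm, hx₀⟩
  obtain ⟨c, hc, hc0⟩ := hsub h0mem
  have hcroot : F.IsRoot c := hc0
  calc maxRoot (f i₀) = m := rfl
    _ ≤ c := hc.1
    _ ≤ maxRoot F := le_csSup ((F.finite_setOf_isRoot hF0).bddAbove) hcroot
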